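/- arXiv:1911.07687 — 3 statements merged into one kernel-verified Lean document; each statement's English description precedes it below -/
import Mathlib

section
/- Let f : X → ℝ be differentiable and concave on an open convex set X ⊆ ℝⁿ, and g : X → ℝ be affine and strictly positive on X. Then u = f/g is pseudo-concave on X: for all x, y ∈ X, if u(y) < u(x) then ∇u(y)ᵀ(x - y) > 0. -/
open Filter Set Topology

/-- Ratio of a differentiable concave function and a strictly positive affine
function is pseudo-concave on an open convex set. -/
theorem pseudoconcave_ratio {n : ℕ} (X : Set (Fin n → ℝ)) (hXo : IsOpen X)
    (hX : Convex ℝ X) (f g : (Fin n → ℝ) → ℝ)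
    (hfd : ∀ x ∈ X, DifferentiableAt ℝ f x)
    (hf : ConcaveOn ℝ X f)
    (hgaff : ∀ x ∈ X, ∀ y ∈ X, ∀ l : ℝ, 0 ≤ l → l ≤ 1 →
      g (l • x + (1 - l) • y) = l * g x + (1 - l) * g y)
    (hgd : ∀ x ∈ X, DifferentiableAt ℝ g x)
    (hgpos : ∀ x ∈ X, 0 < g x) :
    ∀ x ∈ X, ∀ y ∈ X, f y / g y < f x / g x →
      0 < fderiv ℝ (fun z => f z / g z) y (x - y) := by
  intro x hx y hy hlt
  set d : Fin n → ℝ := x - y with hd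
  have gy := hgpos y hy
  have gx := hgpos x hx
  have gyne : g y ≠ 0 := ne_of_gt gy
  set A : ℝ := fderiv ℝ f y d with hA
  set B : ℝ := fderiv ℝ g y d with hB
  -- the line t ↦ y + t • d
  have hline : HasDerivAt (fun t : ℝ => y + t • d) d 0 := by
    simpa using ((hasDerivAt_id (0 : ℝ)).smul_const d).const_add y
  have hzero : y + (0 : ℝ) • d = y := by simp
  -- derivative of f along the line
  have hF : HasDerivAt (fun t : ℝ => f (y + t • d)) A 0 := by
    have h1 : HasFDerivAt f (fderiv ℝ f y) (y + (0 : ℝ) • d) := by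
      rw [hzero]; exact (hfd y hy).hasFDerivAt
    exact h1.comp_hasDerivAt 0 hline
  -- derivative of g along the line
  have hG : HasDerivAt (fun t : ℝ => g (y + t • d)) B 0 := by
    have h1 : HasFDerivAt g (fderiv ℝ g y) (y + (0 : ℝ) • d) := by
      rw [hzero]; exact (hgd y hy).hasFDerivAt
    exact h1.comp_hasDerivAt 0 hline
  -- points on the segment
  have hseg : ∀ t : ℝ, t ∈ Set.Ioc (0 : ℝ) 1 → y + t • d = t • x + (1 - t) • y := by
    intro t ht
    rw [hd]
    module
  -- restriction of slope-tendsto to the right filter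
  have hsub : 𝓝[>] (0 : ℝ) ≤ 𝓝[≠] (0 : ℝ) :=
    nhdsWithin_mono 0 (fun t ht => ne_of_gt ht)
  have hIoc : Set.Ioc (0 : ℝ) 1 ∈ 𝓝[>] (0 : ℝ) :=
    Ioc_mem_nhdsGT_of_mem ⟨le_refl 0, zero_lt_one⟩
  -- bound on A from concavity
  have hAge : f x - f y ≤ A := by
    have htend : Tendsto (slope (fun t : ℝ => f (y + t • d)) 0) (𝓝[>] 0) (𝓝 A) :=
      (hasDerivAt_iff_tendsto_slope.1 hF).mono_left hsub
    refine ge_of_tendsto htend (Filter.eventually_of_mem hIoc ?_)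
    intro t ht
    have hc := hf.2 hx hy (show (0:ℝ) ≤ t from ht.1.le)
      (show (0:ℝ) ≤ 1 - t by linarith [ht.2]) (show t + (1 - t) = 1 by ring)
    rw [slope_def_field, hzero, hseg t ht, sub_zero, le_div_iff₀ ht.1]
    simp only [smul_eq_mul] at hc
    nlinarith
  -- exact value of B from affineness of g
  have hBeq : B = g x - g y := by
    have htend : Tendsto (slope (fun t : ℝ => g (y + t • d)) 0) (𝓝[>] 0) (𝓝 B) :=
      (hasDerivAt_iff_tendsto_slope.1 hG).mono_left hsub
    have hconst : Tendsto (slope (fun t : ℝ => g (y + t • d)) 0) (𝓝[>] 0)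
        (𝓝 (g x - g y)) := by
      have heq : ∀ t ∈ Set.Ioc (0 : ℝ) 1,
          slope (fun t : ℝ => g (y + t • d)) 0 t = g x - g y := by
        intro t ht
        rw [slope_def_field, hzero, hseg t ht, sub_zero,
          hgaff x hx y hy t (le_of_lt ht.1) ht.2]
        rw [div_eq_iff (ne_of_gt ht.1)]
        ring
      exact Tendsto.congr' (Filter.eventually_of_mem hIoc fun t ht => (heq t ht).symm)
        tendsto_const_nhds
    exact tendsto_nhds_unique htend hconst
  -- differentiability of the quotient at y
  have hud : DifferentiableAt ℝ (fun z => f z / g z) y := by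
    simp only [div_eq_mul_inv]
    exact (hfd y hy).mul ((hgd y hy).inv gyne)
  -- derivative of the quotient along the line, two ways
  have hgne0 : g (y + (0 : ℝ) • d) ≠ 0 := by rw [hzero]; exact gyne
  have hq : HasDerivAt (fun t : ℝ => f (y + t • d) / g (y + t • d))
      ((A * g y - f y * B) / g y ^ 2) 0 := by
    have := hF.div hG hgne0
    rw [hzero] at this
    exact this
  have hq' : HasDerivAt (fun t : ℝ => f (y + t • d) / g (y + t • d))
      (fderiv ℝ (fun z => f z / g z) y d) 0 := by
    have h1 : HasFDerivAt (fun z => f z / g z) (fderiv ℝ (fun z => f z / g z) y)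
        (y + (0 : ℝ) • d) := by
      rw [hzero]; exact hud.hasFDerivAt
    exact h1.comp_hasDerivAt 0 hline
  have hval : fderiv ℝ (fun z => f z / g z) y d = (A * g y - f y * B) / g y ^ 2 :=
    hq'.unique hq
  -- conclude
  rw [hval]
  apply div_pos _ (by positivity)
  have hmul : f y * g x < f x * g y := by
    rw [div_lt_div_iff₀ gy gx] at hlt
    linarith
  rw [hBeq]
  nlinarith [mul_le_mul_of_nonneg_right hAge (le_of_lt gy)]
end

section
/- For p > 0, let u(p) = log(1 + a·p)/(p + c) with constants a > 0 and c > 0. Then there exists a unique p* > 0 such that u is strictly increasing on (0, p*) and strictly decreasing on (p*, ∞), and p* satisfies a·(p* + c)/(1 + a·p*) = log(1 + a·p*). -/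
open Real Set

/-- The single-channel energy efficiency u(p) = log(1+ap)/(p+c) has a unique
maximizer p* > 0: u is strictly increasing before p*, strictly decreasing after,
and p* satisfies a(p*+c)/(1+ap*) = log(1+ap*). -/
theorem ee_unique_maximizer (a c : ℝ) (ha : 0 < a) (hc : 0 < c) :
    ∃! pstar : ℝ, 0 < pstar ∧
      StrictMonoOn (fun p => Real.log (1 + a * p) / (p + c)) (Set.Ioc 0 pstar) ∧
      StrictAntiOn (fun p => Real.log (1 + a * p) / (p + c)) (Set.Ici pstar) ∧
      a * (pstar + c) / (1 + a * pstar) = Real.log (1 + a * pstar) := by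
  set f : ℝ → ℝ := fun p => Real.log (1 + a * p) / (p + c) with hf
  set g : ℝ → ℝ := fun p => a * (p + c) / (1 + a * p) - Real.log (1 + a * p) with hg
  have hpos : ∀ p : ℝ, 0 ≤ p → 0 < 1 + a * p := fun p hp => by positivity
  have hpc : ∀ p : ℝ, 0 ≤ p → 0 < p + c := fun p hp => by linarith
  -- derivative of g
  have hgderiv : ∀ p : ℝ, 0 ≤ p → HasDerivAt g (-(a^2 * (p + c)) / (1 + a*p)^2) p := by
    intro p hp
    have h1 : (1 + a*p) ≠ 0 := (hpos p hp).ne'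
    have d1 : HasDerivAt (fun q : ℝ => 1 + a * q) a p := by
      simpa using ((hasDerivAt_id p).const_mul a).const_add 1
    have d2 : HasDerivAt (fun q : ℝ => a * (q + c)) a p := by
      simpa using ((hasDerivAt_id p).add_const c).const_mul a
    have d3 : HasDerivAt (fun q : ℝ => a * (q + c) / (1 + a * q))
        ((a * (1 + a*p) - a * (p + c) * a) / (1 + a*p)^2) p := d2.div d1 h1
    have d4 : HasDerivAt (fun q : ℝ => Real.log (1 + a * q)) (a / (1 + a*p)) p := by
      simpa using (d1.log h1)
    have := d3.sub d4
    refine this.congr_deriv ?_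
    field_simp
    ring
  -- derivative of f
  have hfderiv : ∀ p : ℝ, 0 ≤ p → HasDerivAt f (g p / (p + c)^2) p := by
    intro p hp
    have h1 : (1 + a*p) ≠ 0 := (hpos p hp).ne'
    have h2 : (p + c) ≠ 0 := (hpc p hp).ne'
    have d1 : HasDerivAt (fun q : ℝ => 1 + a * q) a p := by
      simpa using ((hasDerivAt_id p).const_mul a).const_add 1
    have d4 : HasDerivAt (fun q : ℝ => Real.log (1 + a * q)) (a / (1 + a*p)) p := by
      simpa using (d1.log h1)
    have d5 : HasDerivAt (fun q : ℝ => q + c) 1 p := (hasDerivAt_id p).add_const c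
    have := d4.div d5 h2
    refine this.congr_deriv ?_
    simp only [hg]
    field_simp
  -- g strictly decreasing on Ici 0
  have hganti : StrictAntiOn g (Ici 0) := by
    apply strictAntiOn_of_deriv_neg (convex_Ici 0)
    · exact fun x hx => (hgderiv x hx).continuousAt.continuousWithinAt
    · intro x hx
      rw [interior_Ici] at hx
      rw [(hgderiv x (le_of_lt hx)).deriv]
      apply div_neg_of_neg_of_pos
      · have hxc := hpc x (le_of_lt hx)
        have := mul_pos (pow_pos ha 2) hxc
        linarith
      · have := hpos x (le_of_lt hx)
        positivity
  -- find the root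
  set P : ℝ := max c (Real.exp 3 / a) with hP
  have hP1 : c ≤ P := le_max_left _ _
  have hP2 : Real.exp 3 / a ≤ P := le_max_right _ _
  have hPpos : 0 < P := lt_of_lt_of_le hc hP1
  have haP : Real.exp 3 ≤ a * P := by
    rw [div_le_iff₀ ha] at hP2; linarith [hP2]
  have hg0 : g 0 = a * c := by
    simp [hg]
  have hgP : g P < 0 := by
    have hlog : (3:ℝ) ≤ Real.log (1 + a * P) := by
      rw [Real.le_log_iff_exp_le (hpos P hPpos.le)]
      linarith
    have hfrac : a * (P + c) / (1 + a * P) ≤ 2 := by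
      rw [div_le_iff₀ (hpos P hPpos.le)]
      nlinarith [mul_le_mul_of_nonneg_left hP1 ha.le]
    simp only [hg]
    linarith
  have hcont : ContinuousOn g (Icc 0 P) :=
    fun x hx => (hgderiv x hx.1).continuousAt.continuousWithinAt
  have hivt := intermediate_value_Icc' hPpos.le hcont
  have h0mem : (0:ℝ) ∈ Icc (g P) (g 0) := by
    constructor <;> [linarith; nlinarith]
  obtain ⟨ps, hpsmem, hpseq⟩ := hivt h0mem
  have hps0 : 0 < ps := by
    rcases eq_or_lt_of_le hpsmem.1 with h | h
    · exfalso; rw [← h] at hpseq; rw [hpseq] at hg0; nlinarith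
    · exact h
  refine ⟨ps, ⟨hps0, ?_, ?_, ?_⟩, ?_⟩
  · -- StrictMonoOn on Ioc 0 ps
    apply strictMonoOn_of_deriv_pos (convex_Ioc 0 ps)
    · exact fun x hx => (hfderiv x hx.1.le).continuousAt.continuousWithinAt
    · intro x hx
      rw [interior_Ioc] at hx
      rw [(hfderiv x hx.1.le).deriv]
      apply div_pos
      · have : g ps < g x := hganti (le_of_lt hx.1) hps0.le hx.2
        linarith [hpseq ▸ this]
      · have := hpc x hx.1.le; positivity
  · -- StrictAntiOn on Ici ps
    apply strictAntiOn_of_deriv_neg (convex_Ici ps)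
    · exact fun x hx => (hfderiv x (hps0.le.trans hx)).continuousAt.continuousWithinAt
    · intro x hx
      rw [interior_Ici] at hx
      have hx0 : 0 < x := hps0.trans hx
      rw [(hfderiv x hx0.le).deriv]
      apply div_neg_of_neg_of_pos
      · have : g x < g ps := hganti hps0.le hx0.le hx
        linarith [hpseq ▸ this]
      · have := hpc x hx0.le; positivity
  · -- the first-order condition
    have : a * (ps + c) / (1 + a * ps) - Real.log (1 + a * ps) = 0 := hpseq
    linarith
  · -- uniqueness
    rintro q ⟨hq0, _, _, hq4⟩
    have hgq : g q = 0 := by simp only [hg]; rw [hq4]; ring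
    exact hganti.injOn hq0.le hps0.le (hgq.trans hpseq.symm)
end

section
/- Let BR : ℝ₊ᵏ → ℝ₊ᵏ be a standard function, i.e., (1) BR(q) ≥ 0 for all q ≥ 0 (componentwise), (2) q' ≥ q implies BR(q') ≥ BR(q), (3) for all α > 1 and q ≥ 0, BR(αq) < α·BR(q) (componentwise strict). Then BR has at most one fixed point in ℝ₊ᵏ with all components strictly positive. -/
private lemma yates_aux {k : ℕ}
    (BR : (Fin k → ℝ) → (Fin k → ℝ))
    (hmono : ∀ q q' : Fin k → ℝ, 0 ≤ q → q ≤ q' → BR q ≤ BR q')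
    (hscal : ∀ α : ℝ, 1 < α → ∀ q : Fin k → ℝ, 0 ≤ q →
      ∀ i, BR (α • q) i < α * BR q i)
    (p p' : Fin k → ℝ)
    (hp : (∀ i, 0 < p i) ∧ BR p = p)
    (hp' : (∀ i, 0 < p' i) ∧ BR p' = p') :
    p ≤ p' := by
  by_contra h
  rw [Pi.le_def] at h
  push_neg at h
  obtain ⟨j, hj⟩ := h
  haveI : Nonempty (Fin k) := ⟨j⟩
  set α := Finset.univ.sup' Finset.univ_nonempty (fun i => p i / p' i) with hαdef
  obtain ⟨i0, -, hi0⟩ := Finset.exists_mem_eq_sup' (Finset.univ_nonempty)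
    (fun i => p i / p' i)
  have hα1 : 1 < α := lt_of_lt_of_le ((one_lt_div (hp'.1 j)).mpr hj)
    (Finset.le_sup' (fun i => p i / p' i) (Finset.mem_univ j))
  have hle : ∀ i, p i ≤ α * p' i := fun i =>
    (div_le_iff₀ (hp'.1 i)).mp (Finset.le_sup' (fun i => p i / p' i) (Finset.mem_univ i))
  have hp'nn : (0:Fin k → ℝ) ≤ p' := fun i => (hp'.1 i).le
  have hpnn : (0:Fin k → ℝ) ≤ p := fun i => (hp.1 i).le
  have heq : p i0 = α * p' i0 := by
    rw [hαdef, hi0, div_mul_cancel₀ _ (hp'.1 i0).ne']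
  have h1 : p i0 ≤ BR (α • p') i0 := by
    have := hmono p (α • p') hpnn (fun i => by
      simpa [Pi.smul_apply, smul_eq_mul] using hle i)
    calc p i0 = BR p i0 := by rw [hp.2]
    _ ≤ BR (α • p') i0 := this i0
  have h2 : BR (α • p') i0 < α * BR p' i0 := hscal α hα1 p' hp'nn i0
  rw [hp'.2] at h2
  linarith [h1, h2, heq]

/-- A standard function (positive, monotone, scalable in the sense of Yates)
has at most one strictly positive fixed point. -/
theorem standard_function_unique_fixed_point {k : ℕ}
    (BR : (Fin k → ℝ) → (Fin k → ℝ))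
    (hpos : ∀ q : Fin k → ℝ, 0 ≤ q → 0 ≤ BR q)
    (hmono : ∀ q q' : Fin k → ℝ, 0 ≤ q → q ≤ q' → BR q ≤ BR q')
    (hscal : ∀ α : ℝ, 1 < α → ∀ q : Fin k → ℝ, 0 ≤ q →
      ∀ i, BR (α • q) i < α * BR q i)
    (p p' : Fin k → ℝ)
    (hp : (∀ i, 0 < p i) ∧ BR p = p)
    (hp' : (∀ i, 0 < p' i) ∧ BR p' = p') :
    p = p' :=
  le_antisymm (yates_aux BR hmono hscal p p' hp hp')
    (yates_aux BR hmono hscal p' p hp' hp)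
end
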